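/- Let q_c be a root of unity associated with p ≥ 2, let m be a half-integer and i ≥ 0 an integer. Let j and j' be half-integers forming a bound pair for m and p (i.e., j ≠ j', j − m, j' − m ∈ ℤ≥0, ⌊(j−m)/p⌋ = ⌊(j'−m)/p⌋, and j + j' ≡ p − 1 (mod p)), and assume i ≥ j − m and i ≥ j' − m. Write i = r·p + a, j − m = u·p + d, j' − m = u·p + d' with 0 ≤ a, d, d' ≤ p−1. Then the following three statements are equivalent: (1) d ≤ a and d' ≤ a; (2) a_{i,j,m} is singular at q_c; (3) a_{i,j',m} is singular at q_c. -/

import Mathlib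

open Matrix Filter Topology BigOperators Finset

noncomputable section

/-- Spin configurations: basis labels of `(ℂ²)^{⊗n}`; `0` is `+`, `1` is `−`. -/
abbrev Spins (n : ℕ) := Fin n → Fin 2

/-- σ⁺ = [[0,1],[0,0]] -/
def sigmaP : Matrix (Fin 2) (Fin 2) ℂ := fun a b => if a = 0 ∧ b = 1 then 1 else 0

/-- σ⁻ = [[0,0],[1,0]] -/
def sigmaM : Matrix (Fin 2) (Fin 2) ℂ := fun a b => if a = 1 ∧ b = 0 then 1 else 0

/-- diagonal entry of K = diag(v, v⁻¹) -/
def Kdiag (v : ℂ) (a : Fin 2) : ℂ := if a = 0 then v else v⁻¹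

/-- `S_i^A = K^{⊗(i−1)} ⊗ A ⊗ (K⁻¹)^{⊗(n−i)}` as a matrix on `(ℂ²)^{⊗n}`. -/
def siteOp (n : ℕ) (v : ℂ) (A : Matrix (Fin 2) (Fin 2) ℂ) (i : Fin n) :
    Matrix (Spins n) (Spins n) ℂ :=
  fun x y => ∏ k : Fin n,
    if k < i then (if x k = y k then Kdiag v (x k) else 0)
    else if k = i then A (x k) (y k)
    else (if x k = y k then Kdiag v⁻¹ (x k) else 0)

/-- `S^+ = Σ_i S_i^+`. -/
def SpOp (n : ℕ) (v : ℂ) : Matrix (Spins n) (Spins n) ℂ := ∑ i : Fin n, siteOp n v sigmaP i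

/-- `S^- = Σ_i S_i^-`. -/
def SmOp (n : ℕ) (v : ℂ) : Matrix (Spins n) (Spins n) ℂ := ∑ i : Fin n, siteOp n v sigmaM i

/-- `Σ^z = Σ_i 1 ⊗ ⋯ ⊗ σ^z ⊗ ⋯ ⊗ 1` (diagonal). -/
def SzOp (n : ℕ) : Matrix (Spins n) (Spins n) ℂ :=
  fun x y => if x = y then ∑ k : Fin n, (if x k = 0 then (1 : ℂ) else -1) else 0

/-- symmetric q-number `[k] = (q^k − q^{−k})/(q − q⁻¹)`. -/
def qNum (q : ℂ) (k : ℤ) : ℂ := (q ^ k - q ^ (-k)) / (q - q⁻¹)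

/-- q-factorial `[k]! = [k][k−1]⋯[1]`, `[0]! = 1`. -/
def qFact (q : ℂ) : ℕ → ℂ
  | 0 => 1
  | k + 1 => qNum q (k + 1) * qFact q k

/-- q-binomial `[k choose l]`, zero unless `0 ≤ l ≤ k`. -/
def qBinom (q : ℂ) (k l : ℤ) : ℂ :=
  if 0 ≤ l ∧ l ≤ k then qFact q k.toNat / (qFact q l.toNat * qFact q (k - l).toNat) else 0

/-- `q` is generic: nonzero and not a root of unity. -/
def Generic (q : ℂ) : Prop := q ≠ 0 ∧ ∀ k : ℕ, 0 < k → q ^ k ≠ 1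

def GenericSet : Set ℂ := {q | Generic q}

/-- the root of unity `q` is associated with `p`: `p ≥ 2` is minimal with `q^{2p} = 1`. -/
def AssocRootOfUnity (q : ℂ) (p : ℕ) : Prop :=
  2 ≤ p ∧ q ^ (2 * p) = 1 ∧ ∀ k : ℕ, 0 < k → k < p → q ^ (2 * k) ≠ 1

/-- the coefficient `a_{i,j,m}` of the paper, with `k = j − m` and `s = j + m`:
`a = (−1)^{i+k} [i choose k] [i+s+1 choose i+1]⁻¹ [k+s+1] / [i+1]`. -/
def aCoeff (q : ℂ) (i k s : ℤ) : ℂ :=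
  (-1 : ℂ) ^ (i + k) * qBinom q i k * (qBinom q (i + s + 1) (i + 1))⁻¹ *
    qNum q (k + s + 1) / qNum q (i + 1)

/-- `S_r = (S^−)^r (S^+)^r / ([r]!)²` with `q = v²`. -/
def SOp (n : ℕ) (v : ℂ) (r : ℕ) : Matrix (Spins n) (Spins n) ℂ :=
  ((qFact (v ^ 2) r) ^ 2)⁻¹ • (SmOp n v ^ r * SpOp n v ^ r)

/-- a function of `q` is regular at `q_c` if it has a finite limit as `q → q_c`
through generic values of `q`. -/
def RegularAt (f : ℂ → ℂ) (qc : ℂ) : Prop :=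
  ∃ L : ℂ, Tendsto f (𝓝[GenericSet] qc) (𝓝 L)


set_option linter.unusedSectionVars false
set_option linter.unusedVariables false

lemma qNum_nat (q : ℂ) (n : ℕ) : qNum q (n : ℤ) = (q ^ n - (q ^ n)⁻¹) / (q - q⁻¹) := by
  simp only [qNum, _root_.zpow_neg, zpow_natCast]

lemma generic_ne_zero {q : ℂ} (hq : q ∈ GenericSet) : q ≠ 0 := hq.1

lemma generic_pow_ne_one {q : ℂ} (hq : q ∈ GenericSet) {n : ℕ} (hn : 0 < n) : q ^ n ≠ 1 :=
  hq.2 n hn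

lemma generic_sub_inv_ne {q : ℂ} (hq : q ∈ GenericSet) : q - q⁻¹ ≠ 0 := by
  intro h
  have h1 : q * q = 1 := by
    have := sub_eq_zero.mp h
    field_simp [hq.1] at this
    rw [← sq, this]
  exact hq.2 2 (by norm_num) (by rw [sq]; exact h1)

lemma generic_pow_sub_inv_ne {q : ℂ} (hq : q ∈ GenericSet) {n : ℕ} (hn : 0 < n) :
    q ^ n - (q ^ n)⁻¹ ≠ 0 := by
  intro h
  have h1 : q ^ n * q ^ n = 1 := by
    have := sub_eq_zero.mp h
    field_simp [pow_ne_zero n hq.1] at this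
    rw [← sq, this]
  exact hq.2 (2 * n) (by positivity) (by rw [two_mul, pow_add]; exact h1)

lemma generic_qNum_ne_zero {q : ℂ} (hq : q ∈ GenericSet) {n : ℕ} (hn : 0 < n) :
    qNum q (n : ℤ) ≠ 0 := by
  rw [qNum_nat]
  exact div_ne_zero (generic_pow_sub_inv_ne hq hn) (generic_sub_inv_ne hq)

lemma generic_qFact_ne_zero {q : ℂ} (hq : q ∈ GenericSet) (n : ℕ) : qFact q n ≠ 0 := by
  induction n with
  | zero => simp [qFact]
  | succ m ih =>
    show qNum q (m + 1) * qFact q m ≠ 0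
    have : ((m : ℤ) + 1) = ((m + 1 : ℕ) : ℤ) := by push_cast; ring
    rw [this]
    exact mul_ne_zero (generic_qNum_ne_zero hq (Nat.succ_pos m)) ih

section Root
variable {p : ℕ} {qc : ℂ} (hroot : AssocRootOfUnity qc p)
include hroot

lemma qc_ne_zero : qc ≠ 0 := by
  intro h
  have := hroot.2.1
  rw [h, zero_pow (by have := hroot.1; omega)] at this
  exact zero_ne_one this

lemma qc_sq_pow_iff (n : ℕ) : qc ^ (2 * n) = 1 ↔ p ∣ n := by
  constructor
  · intro h
    by_contra hnd
    have hp : 0 < p := by have := hroot.1; omega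
    have hmod : qc ^ (2 * (n % p)) = 1 := by
      have h0 := Nat.div_add_mod n p
      have hn : 2 * n = 2 * p * (n / p) + 2 * (n % p) := by rw [mul_assoc]; omega
      rw [hn, pow_add, pow_mul, hroot.2.1, one_pow, one_mul] at h
      exact h
    have hpos : 0 < n % p := Nat.pos_of_ne_zero (fun h0 => hnd (Nat.dvd_of_mod_eq_zero h0))
    exact hroot.2.2 (n % p) hpos (Nat.mod_lt n hp) hmod
  · rintro ⟨c, rfl⟩
    rw [show 2 * (p * c) = 2 * p * c by ring, pow_mul, hroot.2.1, one_pow]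

lemma qc_abs_one : ‖qc‖ = 1 := by
  have h : ‖qc‖ ^ (2 * p) = 1 := by
    rw [← norm_pow, hroot.2.1, norm_one]
  have hnn : (0:ℝ) ≤ ‖qc‖ := norm_nonneg _
  rcases lt_trichotomy (‖qc‖) 1 with hlt | heq | hgt
  · have := pow_lt_one₀ hnn hlt (by have := hroot.1; omega : 2*p ≠ 0)
    rw [h] at this; exact absurd this (lt_irrefl 1)
  · exact heq
  · have := one_lt_pow₀ hgt (by have := hroot.1; omega : 2*p ≠ 0)
    rw [h] at this; exact absurd this (lt_irrefl 1)

lemma qc_sub_inv_ne : qc - qc⁻¹ ≠ 0 := by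
  intro h
  have h0 := qc_ne_zero hroot
  have h1 : qc * qc = 1 := by
    have := sub_eq_zero.mp h
    field_simp [h0] at this
    rw [← sq, this]
  have h2 : qc ^ (2 * 1) = 1 := by rw [pow_mul, pow_one, sq]; exact h1
  have h3 := Nat.dvd_one.mp ((qc_sq_pow_iff hroot 1).mp h2)
  have := hroot.1
  omega

lemma nebot_generic : (𝓝[GenericSet] qc).NeBot := by
  rw [← mem_closure_iff_nhdsWithin_neBot]
  rw [Metric.mem_closure_iff]
  intro ε hε
  refine ⟨qc * (1 + Complex.ofReal (min (ε/2) 1)), ?_, ?_⟩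
  · constructor
    · apply mul_ne_zero (qc_ne_zero hroot)
      intro h
      have : (1 + Complex.ofReal (min (ε/2) 1)).re = 0 := by rw [h]; simp
      simp [Complex.add_re] at this
      have h1 : (0:ℝ) < min (ε/2) 1 := lt_min (by linarith) one_pos
      linarith
    · intro k hk hone
      have habs : ‖qc * (1 + Complex.ofReal (min (ε/2) 1))‖ = 1 + min (ε/2) 1 := by
        rw [norm_mul, qc_abs_one hroot, one_mul]
        have h1 : (0:ℝ) < min (ε/2) 1 := lt_min (by linarith) one_pos
        rw [show (1 : ℂ) + Complex.ofReal (min (ε/2) 1) = Complex.ofReal (1 + min (ε/2) 1) by push_cast; ring]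
        rw [Complex.norm_real, Real.norm_eq_abs, abs_of_pos (by linarith)]
      have h1 : (0:ℝ) < min (ε/2) 1 := lt_min (by linarith) one_pos
      have : ‖(qc * (1 + Complex.ofReal (min (ε/2) 1))) ^ k‖ = 1 := by
        rw [hone, norm_one]
      rw [norm_pow, habs] at this
      have hgt : (1:ℝ) < 1 + min (ε/2) 1 := by linarith
      have := one_lt_pow₀ hgt (by omega : k ≠ 0)
      linarith
  · have : dist qc (qc * (1 + Complex.ofReal (min (ε/2) 1))) = ‖qc‖ * min (ε/2) 1 := by
      rw [Complex.dist_eq]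
      have : qc - qc * (1 + Complex.ofReal (min (ε/2) 1)) = -(qc * Complex.ofReal (min (ε/2) 1)) := by ring
      rw [this, norm_neg, norm_mul, Complex.norm_real, Real.norm_eq_abs,
        abs_of_pos (lt_min (by linarith) one_pos)]
    rw [this, qc_abs_one hroot, one_mul]
    have := min_le_left (ε/2) 1
    linarith

lemma tendsto_qNum (m : ℕ) :
    Tendsto (fun q => qNum q (m : ℤ)) (𝓝[GenericSet] qc) (𝓝 (qNum qc (m : ℤ))) := by
  have h0 := qc_ne_zero hroot
  have h1 : ContinuousAt (fun q : ℂ => (q ^ m - (q ^ m)⁻¹) / (q - q⁻¹)) qc := by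
    apply ContinuousAt.div
    · exact (continuous_pow m).continuousAt.sub
        ((continuous_pow m).continuousAt.inv₀ (pow_ne_zero m h0))
    · exact continuousAt_id.sub (continuousAt_inv₀ h0)
    · exact qc_sub_inv_ne hroot
  have := h1.tendsto.mono_left (nhdsWithin_le_nhds (s := GenericSet))
  simpa only [← qNum_nat] using this

lemma qNum_qc_eq_zero : qNum qc (p : ℤ) = 0 := by
  rw [qNum_nat]
  have : qc ^ p - (qc ^ p)⁻¹ = 0 := by
    have h2 : qc ^ p * qc ^ p = 1 := by
      rw [← pow_add]
      have := (qc_sq_pow_iff hroot p).mpr dvd_rfl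
      rw [← this]; congr 1; ring
    rw [sub_eq_zero]
    exact eq_inv_of_mul_eq_one_left h2
  rw [this, zero_div]

lemma qNum_qc_ne_zero {m : ℕ} (hm : ¬ p ∣ m) : qNum qc (m : ℤ) ≠ 0 := by
  rw [qNum_nat]
  have h0 := qc_ne_zero hroot
  apply div_ne_zero
  · intro h
    have h2 : qc ^ (2 * m) = 1 := by
      rw [two_mul, pow_add]
      have := sub_eq_zero.mp h
      field_simp [pow_ne_zero m h0] at this
      rw [← sq, this]
    exact hm ((qc_sq_pow_iff hroot m).mp h2)
  · exact qc_sub_inv_ne hroot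

lemma tendsto_ratio {m : ℕ} (hm : p ∣ m) (hm0 : 0 < m) :
    ∃ L : ℂ, L ≠ 0 ∧ Tendsto (fun q => qNum q (m : ℤ) / qNum q (p : ℤ))
      (𝓝[GenericSet] qc) (𝓝 L) := by
  obtain ⟨c, rfl⟩ := hm
  have hc : 0 < c := by
    rcases Nat.eq_zero_or_pos c with h | h
    · subst h; simp at hm0
    · exact h
  have hp : 0 < p := by have := hroot.1; omega
  have h0 := qc_ne_zero hroot
  set R : ℂ → ℂ := fun q => q ^ p * (q ^ (p * c))⁻¹ * ∑ t ∈ range c, (q ^ (2 * p)) ^ t with hR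
  refine ⟨R qc, ?_, ?_⟩
  · have hsum : ∑ t ∈ range c, (qc ^ (2 * p)) ^ t = (c : ℂ) := by
      rw [hroot.2.1]; simp
    rw [hR]; simp only
    rw [hsum]
    exact mul_ne_zero (mul_ne_zero (pow_ne_zero _ h0) (inv_ne_zero (pow_ne_zero _ h0)))
      (Nat.cast_ne_zero.mpr (by omega))
  · have hcont : Tendsto R (𝓝[GenericSet] qc) (𝓝 (R qc)) := by
      apply Tendsto.mono_left _ (nhdsWithin_le_nhds (s := GenericSet))
      apply ContinuousAt.tendsto
      apply ContinuousAt.mul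
      apply ContinuousAt.mul
      · exact (continuous_pow p).continuousAt
      · exact (continuous_pow (p*c)).continuousAt.inv₀ (pow_ne_zero _ h0)
      · exact (continuous_finset_sum _ (fun t _ => (continuous_pow (2*p)).pow t)).continuousAt
    apply Tendsto.congr' _ hcont
    filter_upwards [self_mem_nhdsWithin] with q hq
    have hq0 : q ≠ 0 := hq.1
    have hd1 : q - q⁻¹ ≠ 0 := generic_sub_inv_ne hq
    have hdp : q ^ p - (q ^ p)⁻¹ ≠ 0 := generic_pow_sub_inv_ne hq hp
    have gs := geom_sum_mul (q ^ (2 * p)) c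
    rw [qNum_nat, qNum_nat]
    rw [div_div_div_cancel_right₀ hd1]
    rw [hR]; simp only
    rw [eq_div_iff hdp]
    have hinv1 : q ^ p * (q ^ p)⁻¹ = 1 := mul_inv_cancel₀ (pow_ne_zero _ hq0)
    have hinv2 : q ^ (p * c) * (q ^ (p * c))⁻¹ = 1 := mul_inv_cancel₀ (pow_ne_zero _ hq0)
    linear_combination (-(q ^ (p * c))⁻¹ * (∑ t ∈ range c, (q ^ (2 * p)) ^ t)) * hinv1 +
      (q ^ (p * c))⁻¹ * gs + q ^ (p * c) * hinv2

end Root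

variable {p : ℕ} {qc : ℂ}

/-- `f` tends to a nonzero limit along generic `q → qc`. -/
def UnitLim (qc : ℂ) (f : ℂ → ℂ) : Prop :=
  ∃ L : ℂ, L ≠ 0 ∧ Tendsto f (𝓝[GenericSet] qc) (𝓝 L)

lemma UnitLim.mul {qc : ℂ} {f g : ℂ → ℂ} (hf : UnitLim qc f) (hg : UnitLim qc g) :
    UnitLim qc (fun q => f q * g q) := by
  obtain ⟨Lf, hLf, hf⟩ := hf
  obtain ⟨Lg, hLg, hg⟩ := hg
  exact ⟨Lf * Lg, mul_ne_zero hLf hLg, hf.mul hg⟩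

lemma UnitLim.div {qc : ℂ} {f g : ℂ → ℂ} (hf : UnitLim qc f) (hg : UnitLim qc g) :
    UnitLim qc (fun q => f q / g q) := by
  obtain ⟨Lf, hLf, hf⟩ := hf
  obtain ⟨Lg, hLg, hg⟩ := hg
  exact ⟨Lf / Lg, div_ne_zero hLf hLg, hf.div hg hLg⟩

lemma unit_qNum_norm (hroot : AssocRootOfUnity qc p) (m : ℕ) (hm : 0 < m) :
    UnitLim qc (fun q => qNum q (m : ℤ) / qNum q (p : ℤ) ^ (if p ∣ m then 1 else 0)) := by
  by_cases h : p ∣ m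
  · simp only [h, if_true, pow_one]
    exact tendsto_ratio hroot h hm
  · simp only [h, if_false, pow_zero, div_one]
    exact ⟨qNum qc (m : ℤ), qNum_qc_ne_zero hroot h, tendsto_qNum hroot m⟩

lemma unit_qFact (hroot : AssocRootOfUnity qc p) (n : ℕ) :
    UnitLim qc (fun q => qFact q n / qNum q (p : ℤ) ^ (n / p)) := by
  induction n with
  | zero =>
    simp only [Nat.zero_div, pow_zero, div_one]
    exact ⟨1, one_ne_zero, by simpa [qFact] using tendsto_const_nhds⟩
  | succ m ih =>
    have hstep := (unit_qNum_norm hroot (m + 1) (Nat.succ_pos m)).mul ih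
    have heq : ∀ q : ℂ, qFact q (m + 1) / qNum q (p : ℤ) ^ ((m + 1) / p)
        = (qNum q ((m + 1 : ℕ) : ℤ) / qNum q (p : ℤ) ^ (if p ∣ m + 1 then 1 else 0)) *
          (qFact q m / qNum q (p : ℤ) ^ (m / p)) := by
      intro q
      rw [div_mul_div_comm, ← pow_add]
      have h1 : qFact q (m + 1) = qNum q ((m + 1 : ℕ) : ℤ) * qFact q m := by
        show qNum q ((m : ℤ) + 1) * qFact q m = _
        norm_num
      rw [h1, Nat.succ_div]
      ring_nf
    refine ⟨_, hstep.choose_spec.1, ?_⟩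
    have := hstep.choose_spec.2
    apply Tendsto.congr _ this
    intro q
    exact (heq q).symm

lemma regular_iff_aux (hroot : AssocRootOfUnity qc p) (f g : ℂ → ℂ) (N D : ℕ) (L : ℂ)
    (hL : L ≠ 0) (hg : Tendsto g (𝓝[GenericSet] qc) (𝓝 L))
    (hfg : ∀ q ∈ GenericSet, f q = g q * qNum q (p : ℤ) ^ N / qNum q (p : ℤ) ^ D) :
    RegularAt f qc ↔ D ≤ N := by
  haveI := nebot_generic hroot
  have hp : 0 < p := by have := hroot.1; omega
  constructor
  · rintro ⟨L', hL'⟩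
    by_contra hND
    push_neg at hND
    -- f q * E^(D-N) = g q on GenericSet
    have hEq : ∀ q ∈ GenericSet, f q * qNum q (p : ℤ) ^ (D - N) = g q := by
      intro q hq
      rw [hfg q hq]
      have hE : qNum q (p : ℤ) ≠ 0 := generic_qNum_ne_zero hq hp
      have hns : N + (D - N) = D := by omega
      field_simp
      rw [mul_assoc, ← pow_add, hns]
    have hEtend : Tendsto (fun q => qNum q (p : ℤ) ^ (D - N)) (𝓝[GenericSet] qc)
        (𝓝 0) := by
      have h0 : qNum qc (p : ℤ) ^ (D - N) = 0 := by
        rw [qNum_qc_eq_zero hroot, zero_pow (by omega : D - N ≠ 0)]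
      rw [← h0]
      exact (tendsto_qNum hroot p).pow (D - N)
    have h1 : Tendsto (fun q => f q * qNum q (p : ℤ) ^ (D - N)) (𝓝[GenericSet] qc)
        (𝓝 (L' * 0)) := hL'.mul hEtend
    have h2 : Tendsto g (𝓝[GenericSet] qc) (𝓝 (L' * 0)) := by
      apply h1.congr'
      filter_upwards [self_mem_nhdsWithin] with q hq
      exact hEq q hq
    have := tendsto_nhds_unique h2 hg
    rw [mul_zero] at this
    exact hL this.symm
  · intro hND
    refine ⟨L * qNum qc (p : ℤ) ^ (N - D), ?_⟩
    have h1 : Tendsto (fun q => g q * qNum q (p : ℤ) ^ (N - D)) (𝓝[GenericSet] qc)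
        (𝓝 (L * qNum qc (p : ℤ) ^ (N - D))) := hg.mul ((tendsto_qNum hroot p).pow (N - D))
    apply h1.congr'
    filter_upwards [self_mem_nhdsWithin] with q hq
    rw [hfg q hq]
    have hE : qNum q (p : ℤ) ≠ 0 := generic_qNum_ne_zero hq hp
    rw [mul_div_assoc, pow_sub₀ _ hE hND, div_eq_mul_inv]

lemma UnitLim.const_mul {qc : ℂ} (c : ℂ) (hc : c ≠ 0) {f : ℂ → ℂ} (hf : UnitLim qc f) :
    UnitLim qc (fun q => c * f q) := by
  obtain ⟨L, hL, hf⟩ := hf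
  exact ⟨c * L, mul_ne_zero hc hL, (tendsto_const_nhds.mul hf)⟩

def gFun (p i k sN : ℕ) : ℂ → ℂ := fun q =>
  ((-1 : ℂ) ^ (i + k) *
    (qFact q i / qNum q (p:ℤ) ^ (i / p) *
     (qFact q (i+1) / qNum q (p:ℤ) ^ ((i+1) / p)) *
     (qFact q sN / qNum q (p:ℤ) ^ (sN / p)) *
     (qNum q ((k+sN+1 : ℕ) : ℤ) / qNum q (p:ℤ) ^ (if p ∣ (k+sN+1) then 1 else 0)))) /
  (qFact q k / qNum q (p:ℤ) ^ (k / p) *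
   (qFact q (i-k) / qNum q (p:ℤ) ^ ((i-k) / p)) *
   (qFact q (i+sN+1) / qNum q (p:ℤ) ^ ((i+sN+1) / p)) *
   (qNum q ((i+1 : ℕ) : ℤ) / qNum q (p:ℤ) ^ (if p ∣ (i+1) then 1 else 0)))

lemma unit_gFun {p : ℕ} {qc : ℂ} (hroot : AssocRootOfUnity qc p) (i k sN : ℕ) :
    UnitLim qc (gFun p i k sN) :=
  UnitLim.div
    (UnitLim.const_mul _ (pow_ne_zero _ (neg_ne_zero.mpr one_ne_zero))
      ((((unit_qFact hroot i).mul (unit_qFact hroot (i+1))).mul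
          (unit_qFact hroot sN)).mul (unit_qNum_norm hroot (k+sN+1) (by omega))))
    ((((unit_qFact hroot k).mul (unit_qFact hroot (i-k))).mul
        (unit_qFact hroot (i+sN+1))).mul (unit_qNum_norm hroot (i+1) (by omega)))

set_option maxHeartbeats 1000000 in
lemma div_pow_helper (c a1 a2 a3 a4 b1 b2 b3 b4 E : ℂ)
    (ha2 : a2 ≠ 0) (ha3 : a3 ≠ 0) (hb1 : b1 ≠ 0) (hb2 : b2 ≠ 0) (hb3 : b3 ≠ 0)
    (hb4 : b4 ≠ 0) (hE : E ≠ 0) (n1 n2 n3 n4 m1 m2 m3 m4 : ℕ) :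
    (c * (a1 / E^n1 * (a2 / E^n2) * (a3 / E^n3) * (a4 / E^n4))) /
      (b1 / E^m1 * (b2 / E^m2) * (b3 / E^m3) * (b4 / E^m4)) *
      E^(n1+n2+n3+n4) / E^(m1+m2+m3+m4)
    = c * (a1 / (b1 * b2)) * (b3 / (a2 * a3))⁻¹ * a4 / b4 := by
  have hnum : a1 / E^n1 * (a2 / E^n2) * (a3 / E^n3) * (a4 / E^n4)
      = (a1*a2*a3*a4) / E^(n1+n2+n3+n4) := by
    rw [div_mul_div_comm, div_mul_div_comm, div_mul_div_comm, ← pow_add, ← pow_add, ← pow_add]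
  have hden : b1 / E^m1 * (b2 / E^m2) * (b3 / E^m3) * (b4 / E^m4)
      = (b1*b2*b3*b4) / E^(m1+m2+m3+m4) := by
    rw [div_mul_div_comm, div_mul_div_comm, div_mul_div_comm, ← pow_add, ← pow_add, ← pow_add]
  rw [hnum, hden]
  have hEN : E ^ (n1+n2+n3+n4) ≠ 0 := pow_ne_zero _ hE
  have hEM : E ^ (m1+m2+m3+m4) ≠ 0 := pow_ne_zero _ hE
  generalize hX : E ^ (n1+n2+n3+n4) = X at hEN ⊢
  generalize hY : E ^ (m1+m2+m3+m4) = Y at hEM ⊢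
  field_simp

lemma aCoeff_generic_eq (p : ℕ) (hp : 0 < p) {q : ℂ} (hq : q ∈ GenericSet)
    (i k sN : ℕ) (hik : k ≤ i) :
    aCoeff q i k sN =
      gFun p i k sN q *
        qNum q (p:ℤ) ^ (i/p + (i+1)/p + sN/p + (if p ∣ (k+sN+1) then 1 else 0)) /
        qNum q (p:ℤ) ^ (k/p + (i-k)/p + (i+sN+1)/p + (if p ∣ (i+1) then 1 else 0)) := by
  have hb1 : qBinom q (i:ℤ) (k:ℤ) = qFact q i / (qFact q k * qFact q (i - k)) := by
    rw [qBinom, if_pos ⟨Int.ofNat_nonneg k, by exact_mod_cast hik⟩]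
    have e1 : ((i:ℤ)).toNat = i := by omega
    have e2 : ((k:ℤ)).toNat = k := by omega
    have e3 : ((i:ℤ) - (k:ℤ)).toNat = i - k := by omega
    rw [e1, e2, e3]
  have hb2 : qBinom q ((i:ℤ) + sN + 1) ((i:ℤ) + 1)
      = qFact q (i+sN+1) / (qFact q (i+1) * qFact q sN) := by
    rw [qBinom, if_pos ⟨by positivity, by omega⟩]
    have e1 : ((i:ℤ) + sN + 1).toNat = i + sN + 1 := by omega
    have e2 : ((i:ℤ) + 1).toNat = i + 1 := by omega
    have e3 : ((i:ℤ) + sN + 1 - ((i:ℤ) + 1)).toNat = sN := by omega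
    rw [e1, e2, e3]
  have hsg : (-1 : ℂ) ^ ((i:ℤ) + (k:ℤ)) = (-1 : ℂ) ^ (i + k) := by
    rw [show (i:ℤ) + (k:ℤ) = ((i + k : ℕ) : ℤ) by push_cast; ring, zpow_natCast]
  have hc1 : ((k:ℤ) + (sN:ℤ) + 1) = ((k + sN + 1 : ℕ) : ℤ) := by push_cast; ring
  have hc2 : ((i:ℤ) + 1) = ((i + 1 : ℕ) : ℤ) := by push_cast; ring
  simp only [aCoeff]
  rw [hb1, hb2, hsg, hc1, hc2]
  have hE : qNum q (p:ℤ) ≠ 0 := generic_qNum_ne_zero hq hp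
  have hF1 : qFact q i ≠ 0 := generic_qFact_ne_zero hq i
  have hF2 : qFact q (i+1) ≠ 0 := generic_qFact_ne_zero hq (i+1)
  have hF3 : qFact q sN ≠ 0 := generic_qFact_ne_zero hq sN
  have hF4 : qFact q k ≠ 0 := generic_qFact_ne_zero hq k
  have hF5 : qFact q (i-k) ≠ 0 := generic_qFact_ne_zero hq (i-k)
  have hF6 : qFact q (i+sN+1) ≠ 0 := generic_qFact_ne_zero hq (i+sN+1)
  have hN1 : qNum q ((k+sN+1 : ℕ) : ℤ) ≠ 0 := generic_qNum_ne_zero hq (by omega)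
  have hN2 : qNum q ((i+1 : ℕ) : ℤ) ≠ 0 := generic_qNum_ne_zero hq (by omega)
  simp only [gFun]
  exact (div_pow_helper ((-1 : ℂ) ^ (i + k)) (qFact q i) (qFact q (i+1)) (qFact q sN)
    (qNum q ((k+sN+1 : ℕ) : ℤ)) (qFact q k) (qFact q (i-k)) (qFact q (i+sN+1))
    (qNum q ((i+1 : ℕ) : ℤ)) (qNum q (p:ℤ)) hF2 hF3 hF4 hF5 hF6 hN2 hE
    (i/p) ((i+1)/p) (sN/p) (if p ∣ (k+sN+1) then 1 else 0)
    (k/p) ((i-k)/p) ((i+sN+1)/p) (if p ∣ (i+1) then 1 else 0)).symm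

lemma nat_div_eq {p x : ℕ} (q r' : ℕ) (hp : 0 < p) (h : x = q * p + r') (hr : r' < p) :
    x / p = q := by
  subst h
  rw [Nat.mul_comm, Nat.mul_add_div hp, Nat.div_eq_of_lt hr, Nat.add_zero]

lemma nat_mod_eq {p x : ℕ} (q r' : ℕ) (hp : 0 < p) (h : x = q * p + r') (hr : r' < p) :
    x % p = r' := by
  subst h
  rw [Nat.mul_comm, Nat.mul_add_mod, Nat.mod_eq_of_lt hr]

lemma coeff_sing_iff (p : ℕ) (qc : ℂ) (hroot : AssocRootOfUnity qc p)
    (M2 : ℤ) (k k' : ℕ) (hne : k ≠ k') (hjm : 0 ≤ M2 + k)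
    (hbound : (M2 + k + k' + 1) % (p : ℤ) = 0)
    (i : ℕ) (hik : k ≤ i)
    (r u a d d' : ℕ) (ha : a ≤ p - 1) (hd : d ≤ p - 1) (hd' : d' ≤ p - 1)
    (hi : i = r * p + a) (hk : k = u * p + d) (hk' : k' = u * p + d') :
    ¬ RegularAt (fun q => aCoeff q i k (M2 + k)) qc ↔ (d ≤ a ∧ d' ≤ a) := by
  have hp2 : 2 ≤ p := hroot.1
  have hp : 0 < p := by omega
  have ha' : a < p := by omega
  have hdp : d < p := by omega
  have hdp' : d' < p := by omega
  have hdd' : d ≠ d' := by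
    intro h; apply hne; rw [hk, hk', h]
  set sN : ℕ := (M2 + k).toNat with hsN
  have hsNeq : M2 + (k : ℤ) = (sN : ℤ) := by omega
  have hfun : (fun q => aCoeff q i k (M2 + k)) = (fun q => aCoeff q i k (sN : ℤ)) := by
    funext q; rw [hsNeq]
  rw [hfun]
  -- decompose sN
  obtain ⟨t, ht⟩ : (p : ℤ) ∣ (M2 + k + k' + 1) := Int.dvd_of_emod_eq_zero hbound
  obtain ⟨tN, htN⟩ : ∃ tN : ℕ, (tN : ℤ) = t - u - 1 := by
    refine ⟨(t - u - 1).toNat, ?_⟩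
    rw [Int.toNat_of_nonneg]
    by_contra hneg
    push_neg at hneg
    have h1 : t - u - 1 ≤ -1 := by omega
    have h2 : (t - u - 1) * p ≤ -1 * p := by
      apply mul_le_mul_of_nonneg_right h1 (by positivity)
    have key : (sN : ℤ) = (t - u - 1) * p + ((p : ℤ) - 1 - d') := by
      have hk'' : (k' : ℤ) = u * p + d' := by exact_mod_cast congrArg (Nat.cast : ℕ → ℤ) hk'
      have h3 : (sN : ℤ) = M2 + k := hsNeq.symm
      rw [h3]
      linear_combination ht - hk''
    have h4 : (0 : ℤ) ≤ sN := Int.ofNat_nonneg sN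
    omega
  have key : (sN : ℤ) = (tN : ℤ) * p + ((p : ℤ) - 1 - d') := by
    have hk'' : (k' : ℤ) = u * p + d' := by exact_mod_cast congrArg (Nat.cast : ℕ → ℤ) hk'
    rw [hsNeq.symm, htN]
    linear_combination ht - hk''
  have hsd : sN = tN * p + (p - 1 - d') := by
    have : ((tN * p + (p - 1 - d') : ℕ) : ℤ) = (tN : ℤ) * p + ((p : ℤ) - 1 - d') := by
      push_cast [Nat.cast_sub (by omega : d' ≤ p - 1), Nat.cast_sub (by omega : 1 ≤ p)]
      ring
    omega
  -- division and dvd facts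
  have hur : d ≤ a → u ≤ r := by
    intro hda
    by_contra hru
    push_neg at hru
    have : (r + 1) * p ≤ u * p := Nat.mul_le_mul_right p hru
    have e4 : (r + 1) * p = r * p + p := by rw [Nat.add_mul, one_mul]
    omega
  have hur2 : a < d → u < r := by
    intro hda
    by_contra hru
    push_neg at hru
    have : r * p ≤ u * p := Nat.mul_le_mul_right p hru
    omega
  have hdiv1 : i / p = r := nat_div_eq r a hp hi ha'
  have hdiv2 : (i + 1) / p = if a + 1 = p then r + 1 else r := by
    by_cases hc : a + 1 = p
    · rw [if_pos hc]
      refine nat_div_eq (r+1) 0 hp ?_ hp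
      have : (r + 1) * p = r * p + p := by rw [Nat.add_mul, one_mul]
      omega
    · rw [if_neg hc]
      exact nat_div_eq r (a+1) hp (by omega) (by omega)
  have hdiv3 : sN / p = tN := nat_div_eq tN (p-1-d') hp hsd (by omega)
  have hdiv4 : k / p = u := nat_div_eq u d hp hk hdp
  have hdiv5 : (i - k) / p = if d ≤ a then r - u else r - u - 1 := by
    by_cases hc : d ≤ a
    · rw [if_pos hc]
      have h5 := hur hc
      have e1 : (r - u) * p = r * p - u * p := Nat.sub_mul r u p
      have e2 : u * p ≤ r * p := Nat.mul_le_mul_right p h5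
      exact nat_div_eq (r-u) (a-d) hp (by omega) (by omega)
    · rw [if_neg hc]
      push_neg at hc
      have h5 := hur2 hc
      have e1 : (r - u - 1) * p = r * p - u * p - p := by
        rw [Nat.sub_mul, Nat.sub_mul, one_mul]
      have e2 : (u + 1) * p ≤ r * p := Nat.mul_le_mul_right p h5
      have e3 : (u + 1) * p = u * p + p := by rw [Nat.add_mul, one_mul]
      exact nat_div_eq (r-u-1) (p+a-d) hp (by omega) (by omega)
  have hdiv6 : (i + sN + 1) / p = if d' ≤ a then r + tN + 1 else r + tN := by
    by_cases hc : d' ≤ a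
    · rw [if_pos hc]
      have e1 : (r + tN + 1) * p = r * p + tN * p + p := by
        rw [Nat.add_mul, Nat.add_mul, one_mul]
      exact nat_div_eq (r+tN+1) (a-d') hp (by omega) (by omega)
    · rw [if_neg hc]
      push_neg at hc
      have e1 : (r + tN) * p = r * p + tN * p := Nat.add_mul r tN p
      exact nat_div_eq (r+tN) (a+p-d') hp (by omega) (by omega)
  have hif1 : (if p ∣ (k + sN + 1) then 1 else 0) = 0 := by
    rw [if_neg]
    intro hdvd
    have h0 : (k + sN + 1) % p = 0 := Nat.dvd_iff_mod_eq_zero.mp hdvd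
    rcases Nat.lt_or_ge d d' with hc | hc
    · have e1 : (u + tN) * p = u * p + tN * p := Nat.add_mul u tN p
      have hmod : (k + sN + 1) % p = p - (d' - d) := nat_mod_eq (u+tN) (p-(d'-d)) hp (by omega) (by omega)
      omega
    · have e1 : (u + tN + 1) * p = u * p + tN * p + p := by
        rw [Nat.add_mul, Nat.add_mul, one_mul]
      have hmod : (k + sN + 1) % p = d - d' := nat_mod_eq (u+tN+1) (d-d') hp (by omega) (by omega)
      omega
  have hif2 : (if p ∣ (i + 1) then 1 else 0) = if a + 1 = p then 1 else 0 := by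
    by_cases hc : a + 1 = p
    · rw [if_pos hc, if_pos]
      have e1 : (r + 1) * p = r * p + p := by rw [Nat.add_mul, one_mul]
      refine ⟨r + 1, ?_⟩
      have e2 : p * (r + 1) = (r + 1) * p := Nat.mul_comm _ _
      omega
    · rw [if_neg hc, if_neg]
      intro hdvd
      have h0 : (i + 1) % p = 0 := Nat.dvd_iff_mod_eq_zero.mp hdvd
      have hmod : (i + 1) % p = a + 1 := nat_mod_eq r (a+1) hp (by omega) (by omega)
      omega
  -- apply the abstract criterion
  obtain ⟨L, hL, hg⟩ := unit_gFun hroot i k sN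
  have hreg := regular_iff_aux hroot (fun q => aCoeff q i k (sN : ℤ)) (gFun p i k sN)
    (i/p + (i+1)/p + sN/p + (if p ∣ (k+sN+1) then 1 else 0))
    (k/p + (i-k)/p + (i+sN+1)/p + (if p ∣ (i+1) then 1 else 0)) L hL hg
    (fun q hq => aCoeff_generic_eq p hp hq i k sN hik)
  rw [hreg, not_le]
  rw [hdiv1, hdiv2, hdiv3, hdiv4, hdiv5, hdiv6, hif1, hif2]
  by_cases hc1 : a + 1 = p
  · have hda : d ≤ a := by omega
    have hda' : d' ≤ a := by omega
    have h5 := hur hda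
    simp only [if_pos hc1, if_pos hda, if_pos hda']
    omega
  · by_cases hc2 : d ≤ a <;> by_cases hc3 : d' ≤ a
    · have h5 := hur hc2
      simp only [if_neg hc1, if_pos hc2, if_pos hc3]
      omega
    · have h5 := hur hc2
      simp only [if_neg hc1, if_pos hc2, if_neg hc3]
      omega
    · push_neg at hc2
      have h5 := hur2 hc2
      simp only [if_neg hc1, if_neg (by omega : ¬ d ≤ a), if_pos hc3]
      omega
    · push_neg at hc2
      have h5 := hur2 hc2
      simp only [if_neg hc1, if_neg (by omega : ¬ d ≤ a), if_neg hc3]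
      omega



/-- for a bound pair `(j, j')` (`k = j−m`, `k' = j'−m`, same cycle,
`j+j' ≡ p−1 mod p`) the following are equivalent: (1) `d ≤ a ∧ d' ≤ a`;
(2) `a_{i,j,m}` is singular at `q_c`; (3) `a_{i,j',m}` is singular at `q_c`. -/
theorem stmt14 (p : ℕ) (qc : ℂ) (hroot : AssocRootOfUnity qc p)
    (M2 : ℤ) (k k' : ℕ) (hne : k ≠ k')
    (hjm : 0 ≤ M2 + k) (hjm' : 0 ≤ M2 + k')
    (hbound : (M2 + k + k' + 1) % (p : ℤ) = 0)
    (i : ℕ) (hik : k ≤ i) (hik' : k' ≤ i)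
    (r u a d d' : ℕ) (ha : a ≤ p - 1) (hd : d ≤ p - 1) (hd' : d' ≤ p - 1)
    (hi : i = r * p + a) (hk : k = u * p + d) (hk' : k' = u * p + d') :
    ((d ≤ a ∧ d' ≤ a) ↔ ¬ RegularAt (fun q => aCoeff q i k (M2 + k)) qc) ∧
    (¬ RegularAt (fun q => aCoeff q i k (M2 + k)) qc ↔
      ¬ RegularAt (fun q => aCoeff q i k' (M2 + k')) qc) := by
  have h1 := coeff_sing_iff p qc hroot M2 k k' hne hjm hbound i hik r u a d d' ha hd hd' hi hk hk'
  have hbound' : (M2 + k' + k + 1) % (p : ℤ) = 0 := by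
    have he : M2 + (k' : ℤ) + k + 1 = M2 + k + k' + 1 := by ring
    rw [he]; exact hbound
  have h2 := coeff_sing_iff p qc hroot M2 k' k (Ne.symm hne) hjm' hbound' i hik' r u a d' d
    ha hd' hd hi hk' hk
  exact ⟨h1.symm, by rw [h1, h2]; tauto⟩

end
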